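/- Complex conjugation, extended to S = OnePoint ℂ by fixing ∞, descends to well-defined continuous involutions σ₁ : X₁ → X₁ and σ₂ : X₂ → X₂, and for i = 1, 2 the fixed-point set of σᵢ equals the image in Xᵢ of ℝ ∪ {∞}. -/
import Mathlib

open OnePoint

/-- Complex conjugation extended to the Riemann sphere `OnePoint ℂ`, fixing `∞`. -/
noncomputable def conjSphere : OnePoint ℂ → OnePoint ℂ := OnePoint.map (starRingEnd ℂ)

/-- Identifications `i ∼ 2i` and `−i ∼ −2i` on the Riemann sphere `OnePoint ℂ`. -/
def relEx2₁ : OnePoint ℂ → OnePoint ℂ → Prop := fun a b =>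
  (a = (Complex.I : OnePoint ℂ) ∧ b = ((2 * Complex.I : ℂ) : OnePoint ℂ)) ∨
  (a = ((-Complex.I : ℂ) : OnePoint ℂ) ∧ b = ((-(2 * Complex.I) : ℂ) : OnePoint ℂ))

/-- Identifications `i ∼ −2i` and `−i ∼ 2i` on the Riemann sphere `OnePoint ℂ`. -/
def relEx2₂ : OnePoint ℂ → OnePoint ℂ → Prop := fun a b =>
  (a = (Complex.I : OnePoint ℂ) ∧ b = ((-(2 * Complex.I) : ℂ) : OnePoint ℂ)) ∨
  (a = ((-Complex.I : ℂ) : OnePoint ℂ) ∧ b = ((2 * Complex.I : ℂ) : OnePoint ℂ))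

/-- The subset `ℝ ∪ {∞}` of the Riemann sphere `OnePoint ℂ`. -/
def realCircle : Set (OnePoint ℂ) :=
  {x | (∃ t : ℝ, x = ((t : ℂ) : OnePoint ℂ)) ∨ x = ∞}

lemma conjSphere_cont : Continuous conjSphere :=
  (Complex.conjCLE.toHomeomorph.onePointCongr).continuous

lemma conjSphere_conjSphere (a : OnePoint ℂ) : conjSphere (conjSphere a) = a := by
  cases a with
  | infty => rfl
  | coe z => show ((starRingEnd ℂ) ((starRingEnd ℂ) z) : OnePoint ℂ) = z; simp

lemma conjSphere_coe (z : ℂ) :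
    conjSphere (z : OnePoint ℂ) = ((starRingEnd ℂ) z : OnePoint ℂ) := rfl

/-- equivalence whose classes are the pair {p,q}, the pair {r,s}, and singletons. -/
def pairRel (p q r s : OnePoint ℂ) : OnePoint ℂ → OnePoint ℂ → Prop := fun a b =>
  a = b ∨ ((a = p ∨ a = q) ∧ (b = p ∨ b = q)) ∨ ((a = r ∨ a = s) ∧ (b = r ∨ b = s))

lemma pairRel_eqv {p q r s : OnePoint ℂ}
    (h1 : p ≠ r) (h2 : p ≠ s) (h3 : q ≠ r) (h4 : q ≠ s) :
    Equivalence (pairRel p q r s) := by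
  constructor
  · intro a; left; rfl
  · intro a b h; rcases h with rfl | h | h
    · left; rfl
    · right; left; exact ⟨h.2, h.1⟩
    · right; right; exact ⟨h.2, h.1⟩
  · intro a b c hab hbc
    rcases hab with rfl | hab | hab
    · exact hbc
    · rcases hbc with rfl | hbc | hbc
      · right; left; exact hab
      · right; left; exact ⟨hab.1, hbc.2⟩
      · exfalso
        rcases hab.2 with rfl | rfl <;> rcases hbc.1 with h | h <;> simp_all
    · rcases hbc with rfl | hbc | hbc
      · right; right; exact hab
      · exfalso
        rcases hab.2 with rfl | rfl <;> rcases hbc.1 with h | h <;> simp_all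
      · right; right; exact ⟨hab.1, hbc.2⟩

lemma eqvGen_le_pairRel {rel : OnePoint ℂ → OnePoint ℂ → Prop} {p q r s : OnePoint ℂ}
    (heqv : Equivalence (pairRel p q r s))
    (hle : ∀ a b, rel a b → pairRel p q r s a b) {a b : OnePoint ℂ}
    (h : Relation.EqvGen rel a b) : pairRel p q r s a b := by
  induction h with
  | rel x y h => exact hle x y h
  | refl x => exact heqv.refl x
  | symm x y _ ih => exact heqv.symm ih
  | trans x y z _ _ ih1 ih2 => exact heqv.trans ih1 ih2

-- distinctness facts
lemma hne1 : (Complex.I : OnePoint ℂ) ≠ ((-Complex.I : ℂ) : OnePoint ℂ) := by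
  intro h; have := OnePoint.coe_injective h; rw [Complex.ext_iff] at this; norm_num at this
lemma hne2 : (Complex.I : OnePoint ℂ) ≠ ((-(2 * Complex.I) : ℂ) : OnePoint ℂ) := by
  intro h; have := OnePoint.coe_injective h
  rw [Complex.ext_iff] at this; norm_num at this
lemma hne3 : ((2 * Complex.I : ℂ) : OnePoint ℂ) ≠ ((-Complex.I : ℂ) : OnePoint ℂ) := by
  intro h; have := OnePoint.coe_injective h
  rw [Complex.ext_iff] at this; norm_num at this
lemma hne4 : ((2 * Complex.I : ℂ) : OnePoint ℂ) ≠ ((-(2 * Complex.I) : ℂ) : OnePoint ℂ) := by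
  intro h; have := OnePoint.coe_injective h
  rw [Complex.ext_iff] at this; norm_num at this
lemma hne5 : (Complex.I : OnePoint ℂ) ≠ ((2 * Complex.I : ℂ) : OnePoint ℂ) := by
  intro h; have := OnePoint.coe_injective h
  rw [Complex.ext_iff] at this; norm_num at this
lemma hne6 : ((-Complex.I : ℂ) : OnePoint ℂ) ≠ ((-(2 * Complex.I) : ℂ) : OnePoint ℂ) := by
  intro h; have := OnePoint.coe_injective h
  rw [Complex.ext_iff] at this; norm_num at this

theorem double_cover_statement_9 :
    ∃ (σ₁ : Quot relEx2₁ → Quot relEx2₁) (σ₂ : Quot relEx2₂ → Quot relEx2₂),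
      Continuous σ₁ ∧ Continuous σ₂ ∧
      (∀ a : OnePoint ℂ, σ₁ (Quot.mk relEx2₁ a) = Quot.mk relEx2₁ (conjSphere a)) ∧
      (∀ a : OnePoint ℂ, σ₂ (Quot.mk relEx2₂ a) = Quot.mk relEx2₂ (conjSphere a)) ∧
      σ₁ ∘ σ₁ = id ∧ σ₂ ∘ σ₂ = id ∧
      {x : Quot relEx2₁ | σ₁ x = x} = Quot.mk relEx2₁ '' realCircle ∧
      {x : Quot relEx2₂ | σ₂ x = x} = Quot.mk relEx2₂ '' realCircle := by
  have hcI : conjSphere (Complex.I : OnePoint ℂ) = ((-Complex.I : ℂ) : OnePoint ℂ) := by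
    rw [conjSphere_coe, OnePoint.coe_eq_coe]; simp
  have hcmI : conjSphere ((-Complex.I : ℂ) : OnePoint ℂ) = (Complex.I : OnePoint ℂ) := by
    rw [conjSphere_coe, OnePoint.coe_eq_coe]; simp
  have hc2I : conjSphere ((2 * Complex.I : ℂ) : OnePoint ℂ)
      = ((-(2 * Complex.I) : ℂ) : OnePoint ℂ) := by
    rw [conjSphere_coe, OnePoint.coe_eq_coe]; simp [Complex.ext_iff]
  have hcm2I : conjSphere ((-(2 * Complex.I) : ℂ) : OnePoint ℂ)
      = ((2 * Complex.I : ℂ) : OnePoint ℂ) := by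
    rw [conjSphere_coe, OnePoint.coe_eq_coe]; simp [Complex.ext_iff]
  have hresp₁ : ∀ a b, relEx2₁ a b →
      Quot.mk relEx2₁ (conjSphere a) = Quot.mk relEx2₁ (conjSphere b) := by
    rintro a b (⟨rfl, rfl⟩ | ⟨rfl, rfl⟩)
    · rw [hcI, hc2I]; exact Quot.sound (Or.inr ⟨rfl, rfl⟩)
    · rw [hcmI, hcm2I]; exact Quot.sound (Or.inl ⟨rfl, rfl⟩)
  have hresp₂ : ∀ a b, relEx2₂ a b →
      Quot.mk relEx2₂ (conjSphere a) = Quot.mk relEx2₂ (conjSphere b) := by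
    rintro a b (⟨rfl, rfl⟩ | ⟨rfl, rfl⟩)
    · rw [hcI, hcm2I]; exact Quot.sound (Or.inr ⟨rfl, rfl⟩)
    · rw [hcmI, hc2I]; exact Quot.sound (Or.inl ⟨rfl, rfl⟩)
  refine ⟨Quot.lift (fun a => Quot.mk relEx2₁ (conjSphere a)) hresp₁,
          Quot.lift (fun a => Quot.mk relEx2₂ (conjSphere a)) hresp₂,
          ?_, ?_, fun a => rfl, fun a => rfl, ?_, ?_, ?_, ?_⟩
  · exact continuous_quot_lift _ ((continuous_quot_mk).comp conjSphere_cont)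
  · exact continuous_quot_lift _ ((continuous_quot_mk).comp conjSphere_cont)
  · funext x
    induction x using Quot.ind with
    | _ a => simp [conjSphere_conjSphere]
  · funext x
    induction x using Quot.ind with
    | _ a => simp [conjSphere_conjSphere]
  · -- fixed points for σ₁: classes {i,2i}, {-i,-2i}
    have heqv := pairRel_eqv hne1 hne2 hne3 hne4
    have hle : ∀ a b, relEx2₁ a b →
        pairRel (Complex.I : OnePoint ℂ) ((2 * Complex.I : ℂ) : OnePoint ℂ)
          ((-Complex.I : ℂ) : OnePoint ℂ) ((-(2 * Complex.I) : ℂ) : OnePoint ℂ) a b := by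
      rintro a b (⟨rfl, rfl⟩ | ⟨rfl, rfl⟩)
      · right; left; exact ⟨Or.inl rfl, Or.inr rfl⟩
      · right; right; exact ⟨Or.inl rfl, Or.inr rfl⟩
    ext x
    induction x using Quot.ind with
    | _ a =>
      simp only [Set.mem_setOf_eq, Set.mem_image]
      constructor
      · intro hfix
        cases a with
        | infty => exact ⟨∞, Or.inr rfl, rfl⟩
        | coe z =>
          have h := eqvGen_le_pairRel heqv hle (Quot.eq.mp hfix)
          rcases h with h | h | h
          · -- conj z = z, so z real
            rw [conjSphere_coe, OnePoint.coe_eq_coe] at h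
            have hz : z = (z.re : ℂ) := by
              rw [Complex.conj_eq_iff_re] at h; exact h.symm
            exact ⟨((z.re : ℂ) : OnePoint ℂ), Or.inl ⟨z.re, rfl⟩, by rw [← hz]⟩
          · exfalso
            rcases h.2 with hz | hz <;> rw [OnePoint.coe_eq_coe] at hz <;> subst hz
            · rcases h.1 with h' | h' <;> rw [hcI] at h'
              · exact hne1.symm h'
              · exact hne3.symm h'
            · rcases h.1 with h' | h' <;> rw [hc2I] at h'
              · exact hne2.symm h'
              · exact hne4.symm h'
          · exfalso
            rcases h.2 with hz | hz <;> rw [OnePoint.coe_eq_coe] at hz <;> subst hz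
            · rcases h.1 with h' | h' <;> rw [hcmI] at h'
              · exact hne1 h'
              · exact hne2 h'
            · rcases h.1 with h' | h' <;> rw [hcm2I] at h'
              · exact hne3 h'
              · exact hne4 h'
      · rintro ⟨y, hy, hyx⟩
        have h2 : Quot.mk relEx2₁ (conjSphere y) = Quot.mk relEx2₁ (conjSphere a) :=
          congrArg (Quot.lift (fun a => Quot.mk relEx2₁ (conjSphere a)) hresp₁) hyx
        have h3 : Quot.mk relEx2₁ (conjSphere y) = Quot.mk relEx2₁ y := by
          rcases hy with ⟨t, rfl⟩ | rfl
          · rw [conjSphere_coe, Complex.conj_ofReal]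
          · rfl
        show Quot.mk relEx2₁ (conjSphere a) = Quot.mk relEx2₁ a
        rw [← h2, h3, hyx]
  · -- fixed points for σ₂: classes {i,-2i}, {-i,2i}
    have heqv := pairRel_eqv hne1 hne5 hne6.symm hne4.symm
    have hle : ∀ a b, relEx2₂ a b →
        pairRel (Complex.I : OnePoint ℂ) ((-(2 * Complex.I) : ℂ) : OnePoint ℂ)
          ((-Complex.I : ℂ) : OnePoint ℂ) ((2 * Complex.I : ℂ) : OnePoint ℂ) a b := by
      rintro a b (⟨rfl, rfl⟩ | ⟨rfl, rfl⟩)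
      · right; left; exact ⟨Or.inl rfl, Or.inr rfl⟩
      · right; right; exact ⟨Or.inl rfl, Or.inr rfl⟩
    ext x
    induction x using Quot.ind with
    | _ a =>
      simp only [Set.mem_setOf_eq, Set.mem_image]
      constructor
      · intro hfix
        cases a with
        | infty => exact ⟨∞, Or.inr rfl, rfl⟩
        | coe z =>
          have h := eqvGen_le_pairRel heqv hle (Quot.eq.mp hfix)
          rcases h with h | h | h
          · rw [conjSphere_coe, OnePoint.coe_eq_coe] at h
            have hz : z = (z.re : ℂ) := by
              rw [Complex.conj_eq_iff_re] at h; exact h.symm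
            exact ⟨((z.re : ℂ) : OnePoint ℂ), Or.inl ⟨z.re, rfl⟩, by rw [← hz]⟩
          · exfalso
            rcases h.2 with hz | hz <;> rw [OnePoint.coe_eq_coe] at hz <;> subst hz
            · rcases h.1 with h' | h' <;> rw [hcI] at h'
              · exact hne1 h'.symm
              · exact hne6 h'
            · rcases h.1 with h' | h' <;> rw [hcm2I] at h'
              · exact hne5 h'.symm
              · exact hne4 h'
          · exfalso
            rcases h.2 with hz | hz <;> rw [OnePoint.coe_eq_coe] at hz <;> subst hz
            · rcases h.1 with h' | h' <;> rw [hcmI] at h'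
              · exact hne1 h'
              · exact hne5 h'
            · rcases h.1 with h' | h' <;> rw [hc2I] at h'
              · exact hne6 h'.symm
              · exact hne4 h'.symm
      · rintro ⟨y, hy, hyx⟩
        have h2 : Quot.mk relEx2₂ (conjSphere y) = Quot.mk relEx2₂ (conjSphere a) :=
          congrArg (Quot.lift (fun a => Quot.mk relEx2₂ (conjSphere a)) hresp₂) hyx
        have h3 : Quot.mk relEx2₂ (conjSphere y) = Quot.mk relEx2₂ y := by
          rcases hy with ⟨t, rfl⟩ | rfl
          · rw [conjSphere_coe, Complex.conj_ofReal]
          · rfl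
        show Quot.mk relEx2₂ (conjSphere a) = Quot.mk relEx2₂ a
        rw [← h2, h3, hyx]
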